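/- Let P be an n×m matrix with nonnegative real entries summing to 1, and let λ_1,…,λ_r be positive reals. Then the following are equivalent: (i) there exist a dimension d_A, a dimension d_B, and families of vectors v_x^i ∈ ℂ^{d_A} (x∈[n], i∈[r]) and w_y^i ∈ ℂ^{d_B} (y∈[m], i∈[r]) such that ∑_{x=1}^n ⟨v_x^j, v_x^i⟩ = δ_{ij}·√λ_i for all i,j∈[r], ∑_{y=1}^m ⟨w_y^j, w_y^i⟩ = δ_{ij}·√λ_i for all i,j∈[r], and ∑_{i,j=1}^r ⟨v_x^j, v_x^i⟩·⟨w_y^j, w_y^i⟩ = P(x,y) for all x∈[n], y∈[m]; (ii) there exists a diagonal form of PSD factorization of P with respect to Λ = diag(√λ_1,…,√λ_r), i.e., r×r positive semidefinite complex matrices C_1,…,C_n and D_1,…,D_m with tr(C_x D_y) = P(x,y) for all x,y and ∑_{x=1}^n C_x = ∑_{y=1}^m D_y = diag(√λ_1,…,√λ_r). -/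

import Mathlib

open Matrix
open scoped ComplexOrder

open MatrixOrder in
theorem Matrix.posSemidef_iff_eq_transpose_mul_self {r : ℕ} {A : Matrix (Fin r) (Fin r) ℂ} :
    A.PosSemidef ↔ ∃ B : Matrix (Fin r) (Fin r) ℂ, A = Bᴴ * B := by
  constructor
  · intro hA
    classical
    obtain ⟨X, hX, -, rfl⟩ :=
      CFC.exists_sqrt_of_isSelfAdjoint_of_quasispectrumRestricts hA.isHermitian
        (QuasispectrumRestricts.nnreal_of_nonneg hA.nonneg)
    exact ⟨X, by rw [show Xᴴ = X from hX.star_eq]⟩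
  · rintro ⟨B, rfl⟩
    exact Matrix.posSemidef_conjTranspose_mul_self B

/-- Equivalence between the Gram-vector (purification) formulation and the
existence of a diagonal form of PSD factorization of `P` with respect to
`Λ = diagonal (√λ₁, …, √λᵣ)`. -/
theorem diagonal_psd_factorization_iff_gram_vectors
    (n m r : ℕ) (P : Matrix (Fin n) (Fin m) ℝ)
    (hP : ∀ x y, 0 ≤ P x y) (hPsum : ∑ x, ∑ y, P x y = 1)
    (l : Fin r → ℝ) (hl : ∀ i, 0 < l i) :
    (∃ (dA dB : ℕ) (v : Fin n → Fin r → Fin dA → ℂ) (w : Fin m → Fin r → Fin dB → ℂ),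
      (∀ i j : Fin r,
        ∑ x, ∑ k, star (v x j k) * v x i k
          = if i = j then (Real.sqrt (l i) : ℂ) else 0) ∧
      (∀ i j : Fin r,
        ∑ y, ∑ k, star (w y j k) * w y i k
          = if i = j then (Real.sqrt (l i) : ℂ) else 0) ∧
      (∀ x y,
        ∑ i, ∑ j, (∑ k, star (v x j k) * v x i k) * (∑ k, star (w y j k) * w y i k)
          = (P x y : ℂ)))
    ↔
    (∃ (C : Fin n → Matrix (Fin r) (Fin r) ℂ) (D : Fin m → Matrix (Fin r) (Fin r) ℂ),
      (∀ x, (C x).PosSemidef) ∧ (∀ y, (D y).PosSemidef) ∧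
      (∀ x y, (C x * D y).trace = (P x y : ℂ)) ∧
      (∑ x, C x) = Matrix.diagonal (fun i => (Real.sqrt (l i) : ℂ)) ∧
      (∑ y, D y) = Matrix.diagonal (fun i => (Real.sqrt (l i) : ℂ))) := by
  constructor
  · rintro ⟨dA, dB, v, w, hv, hw, hvw⟩
    refine ⟨fun x => Matrix.of fun i j => ∑ k, star (v x j k) * v x i k,
      fun y => Matrix.of fun i j => ∑ k, star (w y i k) * w y j k, ?_, ?_, ?_, ?_, ?_⟩
    · intro x
      have h : (Matrix.of fun i j => ∑ k, star (v x j k) * v x i k) =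
          (Matrix.of fun (k : Fin dA) (i : Fin r) => star (v x i k))ᴴ *
          (Matrix.of fun (k : Fin dA) (i : Fin r) => star (v x i k)) := by
        ext i j
        simp [Matrix.mul_apply, Matrix.conjTranspose_apply, mul_comm]
      dsimp only
      rw [h]
      exact Matrix.posSemidef_conjTranspose_mul_self _
    · intro y
      have h : (Matrix.of fun i j => ∑ k, star (w y i k) * w y j k) =
          (Matrix.of fun (k : Fin dB) (i : Fin r) => w y i k)ᴴ *
          (Matrix.of fun (k : Fin dB) (i : Fin r) => w y i k) := by
        ext i j
        simp [Matrix.mul_apply, Matrix.conjTranspose_apply]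
      dsimp only
      rw [h]
      exact Matrix.posSemidef_conjTranspose_mul_self _
    · intro x y
      rw [← hvw x y]
      simp [Matrix.trace, Matrix.diag, Matrix.mul_apply]
    · ext i j
      simp only [Matrix.sum_apply, Matrix.of_apply, Matrix.diagonal_apply]
      exact hv i j
    · ext i j
      simp only [Matrix.sum_apply, Matrix.of_apply, Matrix.diagonal_apply]
      rw [hw j i]
      by_cases h : i = j <;> simp [h, eq_comm]
  · rintro ⟨C, D, hC, hD, htr, hCsum, hDsum⟩
    choose B hB using fun x => Matrix.posSemidef_iff_eq_transpose_mul_self.mp (hC x)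
    choose E hE using fun y => Matrix.posSemidef_iff_eq_transpose_mul_self.mp (hD y)
    refine ⟨r, r, fun x i k => star (B x k i), fun y i k => E y k i, ?_, ?_, ?_⟩
    · intro i j
      have h : ∀ x, (∑ k, star (star (B x k j)) * star (B x k i)) = C x i j := by
        intro x
        rw [hB x]
        simp [Matrix.mul_apply, Matrix.conjTranspose_apply, mul_comm]
      simp only [h]
      rw [← Matrix.sum_apply i j _ (fun x => C x), hCsum, Matrix.diagonal_apply]
    · intro i j
      have h : ∀ y, (∑ k, star (E y k j) * E y k i) = D y j i := by
        intro y
        rw [hE y]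
        simp [Matrix.mul_apply, Matrix.conjTranspose_apply]
      simp only [h]
      rw [← Matrix.sum_apply j i _ (fun y => D y), hDsum, Matrix.diagonal_apply]
      by_cases hij : i = j <;> simp [hij, eq_comm]
    · intro x y
      have h1 : ∀ i j, (∑ k, star (star (B x k j)) * star (B x k i)) = C x i j := by
        intro i j
        rw [hB x]
        simp [Matrix.mul_apply, Matrix.conjTranspose_apply, mul_comm]
      have h2 : ∀ i j, (∑ k, star (E y k j) * E y k i) = D y j i := by
        intro i j
        rw [hE y]
        simp [Matrix.mul_apply, Matrix.conjTranspose_apply]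
      simp only [h1, h2]
      rw [← htr x y]
      simp [Matrix.trace, Matrix.diag, Matrix.mul_apply]
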